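/- Let A, B be n×n complex matrices and T an invertible n×n complex matrix such that T* A* A T = B* B + E with ‖E‖ ≤ C δ⁴, where A = I + O(δ²), B = I + O(δ²) are Hermitian positive definite, and T*T = I + O(δ²) with ‖T‖ ≤ K uniformly. Then there exists a unitary matrix V such that ‖A·T - V·B‖ ≤ C' δ⁴ for a constant C' depending only on n, C, K, for all sufficiently small δ. -/

import Mathlib

open scoped Matrix.Norms.L2Operator ComplexOrder
open Matrix

namespace AIUCAux

variable {n : ℕ}

noncomputable def e {n : ℕ} (y : Fin n → ℂ) : EuclideanSpace ℂ (Fin n) :=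
  (WithLp.equiv 2 (Fin n → ℂ)).symm y

lemma norm_one_le : ‖(1 : Matrix (Fin n) (Fin n) ℂ)‖ ≤ 1 := by
  have h := CStarRing.norm_star_mul_self (x := (1 : Matrix (Fin n) (Fin n) ℂ))
  rw [star_one, one_mul] at h
  nlinarith [norm_nonneg (1 : Matrix (Fin n) (Fin n) ℂ)]

lemma opnorm_le_of_mulVec (M : Matrix (Fin n) (Fin n) ℂ) {c : ℝ} (hc : 0 ≤ c)
    (h : ∀ y : Fin n → ℂ, ‖e (M *ᵥ y)‖ ≤ c * ‖e y‖) : ‖M‖ ≤ c := by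
  rw [Matrix.l2_opNorm_def]
  refine ContinuousLinearMap.opNorm_le_bound _ hc fun x => ?_
  simpa [Matrix.toEuclideanLin_apply, e] using h (WithLp.equiv 2 _ x)

lemma inv_norm_le (M : Matrix (Fin n) (Fin n) ℂ) (hM : IsUnit M.det) {c : ℝ} (hc : 0 ≤ c)
    (h : ∀ y : Fin n → ℂ, ‖e y‖ ≤ c * ‖e (M *ᵥ y)‖) : ‖M⁻¹‖ ≤ c := by
  refine opnorm_le_of_mulVec _ hc fun y => ?_
  have := h (M⁻¹ *ᵥ y)
  rwa [Matrix.mulVec_mulVec, Matrix.mul_nonsing_inv _ hM, Matrix.one_mulVec] at this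

lemma norm_sq_eq (y : Fin n → ℂ) : ‖e y‖ ^ 2 = RCLike.re (dotProduct (star y) y) := by
  rw [← inner_self_eq_norm_sq (𝕜 := ℂ), dotProduct_comm]
  rfl

lemma quad_eq (M : Matrix (Fin n) (Fin n) ℂ) (y : Fin n → ℂ) :
    dotProduct (star (M *ᵥ y)) (M *ᵥ y)
      = dotProduct (star y) ((Mᴴ * M) *ᵥ y) := by
  rw [Matrix.star_mulVec, Matrix.dotProduct_mulVec, Matrix.dotProduct_mulVec,
    Matrix.vecMul_vecMul]

lemma psd_add_one_inv_norm_le {P : Matrix (Fin n) (Fin n) ℂ} (hP : P.PosSemidef)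
    (hdet : IsUnit (P + 1).det) : ‖(P + 1)⁻¹‖ ≤ 1 := by
  refine inv_norm_le _ hdet zero_le_one fun y => ?_
  rw [one_mul]
  have h2 : ‖e y‖ ^ 2 ≤ ‖e ((P + 1) *ᵥ y)‖ ^ 2 := by
    rw [norm_sq_eq, norm_sq_eq, quad_eq]
    have hexp : (P + 1)ᴴ * (P + 1) = (Pᴴ * P + (P + P)) + 1 := by
      rw [Matrix.conjTranspose_add, Matrix.conjTranspose_one, hP.isHermitian]; noncomm_ring
    rw [hexp]
    have hpsd : (Pᴴ * P + (P + P)).PosSemidef :=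
      (Matrix.posSemidef_conjTranspose_mul_self P).add (hP.add hP)
    have := hpsd.re_dotProduct_nonneg y
    rw [Matrix.add_mulVec, dotProduct_add, map_add, Matrix.one_mulVec]
    linarith
  calc ‖e y‖ = Real.sqrt (‖e y‖ ^ 2) := (Real.sqrt_sq (norm_nonneg _)).symm
    _ ≤ Real.sqrt (‖e ((P + 1) *ᵥ y)‖ ^ 2) := Real.sqrt_le_sqrt h2
    _ = ‖e ((P + 1) *ᵥ y)‖ := Real.sqrt_sq (norm_nonneg _)

lemma inv_norm_le_two {B : Matrix (Fin n) (Fin n) ℂ} (hdet : IsUnit B.det)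
    (h : ‖B - 1‖ ≤ 1 / 2) : ‖B⁻¹‖ ≤ 2 := by
  refine inv_norm_le _ hdet (by norm_num) fun y => ?_
  have h1 : ‖e ((B - 1) *ᵥ y)‖ ≤ (1 / 2) * ‖e y‖ := by
    have h2 : ‖e ((B - 1) *ᵥ y)‖ ≤ ‖B - 1‖ * ‖e y‖ := Matrix.l2_opNorm_mulVec (B - 1) (e y)
    have h3 : ‖B - 1‖ * ‖e y‖ ≤ (1 / 2) * ‖e y‖ :=
      mul_le_mul_of_nonneg_right h (norm_nonneg _)
    linarith
  have key : e ((B - 1) *ᵥ y) = e (B *ᵥ y) - e y := by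
    rw [Matrix.sub_mulVec, Matrix.one_mulVec]; simp [e]
  have h4 : ‖e y‖ ≤ ‖e (B *ᵥ y)‖ + ‖e ((B - 1) *ᵥ y)‖ := by
    rw [show e y = e (B *ᵥ y) - e ((B - 1) *ᵥ y) from by rw [key]; abel]
    exact norm_sub_le _ _
  linarith

section
open scoped MatrixOrder

lemma exists_sqrt (G : Matrix (Fin n) (Fin n) ℂ) (hG : G.PosSemidef) :
    ∃ P : Matrix (Fin n) (Fin n) ℂ, P.PosSemidef ∧ P * P = G :=
  ⟨CFC.sqrt G, Matrix.nonneg_iff_posSemidef.1 (CFC.sqrt_nonneg G),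
    CFC.sqrt_mul_sqrt_self G (Matrix.nonneg_iff_posSemidef.2 hG)⟩

end

end AIUCAux

/-- If `Tᴴ·Aᴴ·A·T = Bᴴ·B + E` with `‖E‖ ≤ Cδ⁴`, where `A, B` are Hermitian
positive definite with `‖A - I‖, ‖B - I‖ ≤ Cδ²`, `T` is invertible with
`‖TᴴT - I‖ ≤ Cδ²` and `‖T‖ ≤ K`, then there is a unitary `V` with
`‖A·T - V·B‖ ≤ C'·δ⁴`, where `C'` depends only on `n`, `C`, `K`. -/
theorem approx_isometry_unitary_comparison (n : ℕ) (C K : ℝ) (hC : 0 ≤ C) (hK : 0 ≤ K) :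
    ∃ C' δ₀ : ℝ, 0 < C' ∧ 0 < δ₀ ∧
      ∀ δ : ℝ, 0 < δ → δ < δ₀ →
        ∀ A B T E : Matrix (Fin n) (Fin n) ℂ,
          A.PosDef → B.PosDef → IsUnit T →
          ‖A - 1‖ ≤ C * δ ^ 2 → ‖B - 1‖ ≤ C * δ ^ 2 →
          ‖Tᴴ * T - 1‖ ≤ C * δ ^ 2 → ‖T‖ ≤ K →
          Tᴴ * Aᴴ * A * T = Bᴴ * B + E → ‖E‖ ≤ C * δ ^ 4 →
          ∃ V ∈ Matrix.unitaryGroup (Fin n) ℂ, ‖A * T - V * B‖ ≤ C' * δ ^ 4 := by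
  refine ⟨6 * C + 1, min 1 (1 / (2 * (C + 1))), by positivity, by positivity, ?_⟩
  intro δ hδ hδ₀ A B T E hA hB hT hAI hBI hTI hTK hEq hE
  have hδ1 : δ ≤ 1 := le_of_lt (lt_of_lt_of_le hδ₀ (min_le_left _ _))
  have hδc : δ < 1 / (2 * (C + 1)) := lt_of_lt_of_le hδ₀ (min_le_right _ _)
  have hδ2 : C * δ ^ 2 ≤ 1 / 2 := by
    have h' : δ * (2 * (C + 1)) < 1 := by
      rw [lt_div_iff₀ (by positivity)] at hδc; linarith
    nlinarith
  -- basic facts about B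
  have hBu : IsUnit B := hB.isUnit
  have hBdet : IsUnit B.det := (Matrix.isUnit_iff_isUnit_det _).1 hBu
  have hBH : Bᴴ = B := hB.isHermitian
  have hB1 : ‖B - 1‖ ≤ 1 / 2 := hBI.trans hδ2
  have hBinv : ‖B⁻¹‖ ≤ 2 := AIUCAux.inv_norm_le_two hBdet hB1
  have hBn : ‖B‖ ≤ 3 / 2 := by
    have : ‖B‖ ≤ ‖B - 1‖ + ‖(1 : Matrix (Fin n) (Fin n) ℂ)‖ := by
      simpa using norm_add_le (B - 1) 1
    have h1 := AIUCAux.norm_one_le (n := n)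
    linarith
  set W := A * T * B⁻¹ with hW
  have key : Tᴴ * Aᴴ * A * T = B * B + E := by rw [hEq, hBH]
  have hWW : Wᴴ * W = 1 + B⁻¹ * E * B⁻¹ := by
    calc Wᴴ * W = B⁻¹ * (Tᴴ * Aᴴ * A * T) * B⁻¹ := by
          rw [hW, Matrix.conjTranspose_mul, Matrix.conjTranspose_mul,
            Matrix.conjTranspose_nonsing_inv, hBH]
          noncomm_ring
      _ = B⁻¹ * B * (B * B⁻¹) + B⁻¹ * E * B⁻¹ := by rw [key]; noncomm_ring
      _ = 1 + B⁻¹ * E * B⁻¹ := by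
          rw [Matrix.nonsing_inv_mul _ hBdet, Matrix.mul_nonsing_inv _ hBdet, one_mul]
  have hFn : ‖B⁻¹ * E * B⁻¹‖ ≤ 4 * (C * δ ^ 4) := by
    have h3 : (0:ℝ) ≤ ‖B⁻¹‖ := norm_nonneg _
    have h4 : (0:ℝ) ≤ ‖E‖ := norm_nonneg _
    have e1 : ‖B⁻¹ * E‖ ≤ 2 * (C * δ ^ 4) :=
      (norm_mul_le _ _).trans (mul_le_mul hBinv hE h4 (by norm_num))
    calc ‖B⁻¹ * E * B⁻¹‖ ≤ ‖B⁻¹ * E‖ * ‖B⁻¹‖ := norm_mul_le _ _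
      _ ≤ (2 * (C * δ ^ 4)) * 2 := mul_le_mul e1 hBinv h3 (by positivity)
      _ = 4 * (C * δ ^ 4) := by ring
  -- the positive square root of Wᴴ * W
  have hGpsd : (Wᴴ * W).PosSemidef := Matrix.posSemidef_conjTranspose_mul_self W
  obtain ⟨P, hPpsd, hPsq⟩ := AIUCAux.exists_sqrt _ hGpsd
  have hWu : IsUnit W := (hA.isUnit.mul hT).mul (Matrix.isUnit_nonsing_inv_iff.2 hBu)
  have hWdet : IsUnit W.det := (Matrix.isUnit_iff_isUnit_det _).1 hWu
  have hPdet : IsUnit P.det := by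
    have h1 : IsUnit (P.det * P.det) := by
      rw [← Matrix.det_mul, hPsq, Matrix.det_mul, Matrix.det_conjTranspose]
      exact hWdet.star.mul hWdet
    exact isUnit_of_mul_isUnit_left h1
  have hPH : Pᴴ = P := hPpsd.isHermitian
  have hPinvH : (P⁻¹)ᴴ = P⁻¹ := by rw [Matrix.conjTranspose_nonsing_inv, hPH]
  refine ⟨W * P⁻¹, ?_, ?_⟩
  · rw [Matrix.mem_unitaryGroup_iff', Matrix.star_eq_conjTranspose,
      Matrix.conjTranspose_mul, hPinvH]
    calc P⁻¹ * Wᴴ * (W * P⁻¹) = P⁻¹ * (Wᴴ * W) * P⁻¹ := by noncomm_ring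
      _ = P⁻¹ * P * (P * P⁻¹) := by rw [← hPsq]; noncomm_ring
      _ = 1 := by
          rw [Matrix.nonsing_inv_mul _ hPdet, Matrix.mul_nonsing_inv _ hPdet, one_mul]
  · set V := W * P⁻¹ with hV
    have hVV : Vᴴ * V = 1 := by
      rw [hV, Matrix.conjTranspose_mul, hPinvH]
      calc P⁻¹ * Wᴴ * (W * P⁻¹) = P⁻¹ * (Wᴴ * W) * P⁻¹ := by noncomm_ring
        _ = P⁻¹ * P * (P * P⁻¹) := by rw [← hPsq]; noncomm_ring
        _ = 1 := by
            rw [Matrix.nonsing_inv_mul _ hPdet, Matrix.mul_nonsing_inv _ hPdet, one_mul]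
    have hVn : ‖V‖ ≤ 1 := by
      have h2 := CStarRing.norm_star_mul_self (x := V)
      rw [Matrix.star_eq_conjTranspose, hVV] at h2
      have h1 := AIUCAux.norm_one_le (n := n)
      nlinarith [norm_nonneg V]
    -- ‖P - 1‖ bound
    have hP1pd : (P + 1).PosDef := Matrix.PosDef.posSemidef_add hPpsd Matrix.PosDef.one
    have hQdet : IsUnit (P + 1).det := (Matrix.isUnit_iff_isUnit_det _).1 hP1pd.isUnit
    have hkey2 : (P - 1) * (P + 1) = B⁻¹ * E * B⁻¹ := by
      calc (P - 1) * (P + 1) = P * P - 1 := by noncomm_ring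
        _ = B⁻¹ * E * B⁻¹ := by rw [hPsq, hWW]; abel
    have hPsub : P - 1 = B⁻¹ * E * B⁻¹ * (P + 1)⁻¹ := by
      rw [← hkey2, Matrix.mul_assoc, Matrix.mul_nonsing_inv _ hQdet, Matrix.mul_one]
    have hQn : ‖(P + 1)⁻¹‖ ≤ 1 := AIUCAux.psd_add_one_inv_norm_le hPpsd hQdet
    have hPn : ‖P - 1‖ ≤ 4 * (C * δ ^ 4) := by
      rw [hPsub]
      have h1 : ‖B⁻¹ * E * B⁻¹ * (P + 1)⁻¹‖ ≤ ‖B⁻¹ * E * B⁻¹‖ * ‖(P + 1)⁻¹‖ := norm_mul_le _ _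
      have h3 : (0:ℝ) ≤ ‖B⁻¹ * E * B⁻¹‖ := norm_nonneg _
      nlinarith
    -- final computation
    have hVP : V * P = W := by
      rw [hV, Matrix.mul_assoc, Matrix.nonsing_inv_mul _ hPdet, Matrix.mul_one]
    have hWB : W * B = A * T := by
      rw [hW, Matrix.mul_assoc, Matrix.nonsing_inv_mul _ hBdet, Matrix.mul_one]
    have hfinal : A * T - V * B = V * (P - 1) * B := by
      calc A * T - V * B = V * P * B - V * B := by rw [hVP, hWB]
        _ = V * (P - 1) * B := by noncomm_ring
    rw [hfinal]
    have h3 : (0:ℝ) ≤ ‖P - 1‖ := norm_nonneg _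
    have h6 : (0:ℝ) < δ ^ 4 := by positivity
    have g1 : ‖V * (P - 1)‖ ≤ 4 * (C * δ ^ 4) := by
      calc ‖V * (P - 1)‖ ≤ ‖V‖ * ‖P - 1‖ := norm_mul_le _ _
        _ ≤ 1 * ‖P - 1‖ := mul_le_mul_of_nonneg_right hVn h3
        _ = ‖P - 1‖ := one_mul _
        _ ≤ 4 * (C * δ ^ 4) := hPn
    calc ‖V * (P - 1) * B‖ ≤ ‖V * (P - 1)‖ * ‖B‖ := norm_mul_le _ _
      _ ≤ (4 * (C * δ ^ 4)) * (3 / 2) := mul_le_mul g1 hBn (norm_nonneg _) (by positivity)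
      _ ≤ (6 * C + 1) * δ ^ 4 := by nlinarith
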